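/- For every x in (0, π/2), (−59x^6 + 962x^4 − 3675x^2 + 4095)/(17x^4 + 420x^2 + 4095) < cos^2 x. -/

import Mathlib

open Real

private lemma nonneg_aux (F F' : ℝ → ℝ) (hd : ∀ t, HasDerivAt F (F' t) t) (h0 : F 0 = 0)
    (hF' : ∀ t, 0 < t → 0 ≤ F' t) {x : ℝ} (hx : 0 ≤ x) : 0 ≤ F x := by
  have mono : MonotoneOn F (Set.Ici 0) := by
    apply monotoneOn_of_deriv_nonneg (convex_Ici 0)
    · exact fun t _ => (hd t).continuousAt.continuousWithinAt
    · exact fun t _ => (hd t).differentiableAt.differentiableWithinAt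
    · intro t ht
      rw [interior_Ici] at ht
      rw [(hd t).deriv]
      exact hF' t ht
  have h := mono Set.self_mem_Ici hx hx
  rwa [h0] at h

private lemma cos_ge2 (x : ℝ) (hx : 0 ≤ x) : 1 - x^2/2 ≤ Real.cos x := by
  have h : 0 ≤ Real.cos x - (1 - x^2/2) := by
    apply nonneg_aux _ (fun t => t - Real.sin t) _ (by norm_num) _ hx
    · intro t
      have h1 := Real.hasDerivAt_cos t
      have h2 : HasDerivAt (fun t : ℝ => 1 - t^2/2) (-t) t := by
        have := ((hasDerivAt_pow 2 t).div_const 2).const_sub 1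
        exact this.congr_deriv (by push_cast; ring)
      exact (h1.sub h2).congr_deriv (by ring)
    · intro t ht
      have := Real.sin_le ht.le
      linarith
  linarith

private lemma sin_ge3 (x : ℝ) (hx : 0 ≤ x) : x - x^3/6 ≤ Real.sin x := by
  have h : 0 ≤ Real.sin x - (x - x^3/6) := by
    apply nonneg_aux _ (fun t => Real.cos t - (1 - t^2/2)) _ (by norm_num) _ hx
    · intro t
      have h1 := Real.hasDerivAt_sin t
      have h2 : HasDerivAt (fun t : ℝ => t - t^3/6) (1 - t^2/2) t := by
        have := (hasDerivAt_id t).sub ((hasDerivAt_pow 3 t).div_const 6)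
        exact this.congr_deriv (by push_cast; ring)
      exact h1.sub h2
    · intro t ht
      have := cos_ge2 t ht.le
      linarith
  linarith

private lemma cos_le4 (x : ℝ) (hx : 0 ≤ x) : Real.cos x ≤ 1 - x^2/2 + x^4/24 := by
  have h : 0 ≤ (1 - x^2/2 + x^4/24) - Real.cos x := by
    apply nonneg_aux _ (fun t => Real.sin t - (t - t^3/6)) _ (by norm_num) _ hx
    · intro t
      have h1 := Real.hasDerivAt_cos t
      have h2 : HasDerivAt (fun t : ℝ => 1 - t^2/2 + t^4/24) (-t + t^3/6) t := by
        have := (((hasDerivAt_pow 2 t).div_const 2).const_sub 1).add ((hasDerivAt_pow 4 t).div_const 24)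
        exact this.congr_deriv (by push_cast; ring)
      exact (h2.sub h1).congr_deriv (by ring)
    · intro t ht
      have := sin_ge3 t ht.le
      linarith
  linarith

private lemma sin_le5 (x : ℝ) (hx : 0 ≤ x) : Real.sin x ≤ x - x^3/6 + x^5/120 := by
  have h : 0 ≤ (x - x^3/6 + x^5/120) - Real.sin x := by
    apply nonneg_aux _ (fun t => (1 - t^2/2 + t^4/24) - Real.cos t) _ (by norm_num) _ hx
    · intro t
      have h1 := Real.hasDerivAt_sin t
      have h2 : HasDerivAt (fun t : ℝ => t - t^3/6 + t^5/120) (1 - t^2/2 + t^4/24) t := by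
        have := ((hasDerivAt_id t).sub ((hasDerivAt_pow 3 t).div_const 6)).add
          ((hasDerivAt_pow 5 t).div_const 120)
        exact this.congr_deriv (by push_cast; ring)
      exact h2.sub h1
    · intro t ht
      have := cos_le4 t ht.le
      linarith
  linarith

private lemma cos_ge6 (x : ℝ) (hx : 0 ≤ x) : 1 - x^2/2 + x^4/24 - x^6/720 ≤ Real.cos x := by
  have h : 0 ≤ Real.cos x - (1 - x^2/2 + x^4/24 - x^6/720) := by
    apply nonneg_aux _ (fun t => (t - t^3/6 + t^5/120) - Real.sin t) _ (by norm_num) _ hx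
    · intro t
      have h1 := Real.hasDerivAt_cos t
      have h2 : HasDerivAt (fun t : ℝ => 1 - t^2/2 + t^4/24 - t^6/720) (-t + t^3/6 - t^5/120) t := by
        have := ((((hasDerivAt_pow 2 t).div_const 2).const_sub 1).add
          ((hasDerivAt_pow 4 t).div_const 24)).sub ((hasDerivAt_pow 6 t).div_const 720)
        exact this.congr_deriv (by push_cast; ring)
      exact (h1.sub h2).congr_deriv (by ring)
    · intro t ht
      have := sin_le5 t ht.le
      linarith
  linarith

private lemma sin_ge7 (x : ℝ) (hx : 0 ≤ x) : x - x^3/6 + x^5/120 - x^7/5040 ≤ Real.sin x := by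
  have h : 0 ≤ Real.sin x - (x - x^3/6 + x^5/120 - x^7/5040) := by
    apply nonneg_aux _ (fun t => Real.cos t - (1 - t^2/2 + t^4/24 - t^6/720)) _ (by norm_num) _ hx
    · intro t
      have h1 := Real.hasDerivAt_sin t
      have h2 : HasDerivAt (fun t : ℝ => t - t^3/6 + t^5/120 - t^7/5040)
          (1 - t^2/2 + t^4/24 - t^6/720) t := by
        have := (((hasDerivAt_id t).sub ((hasDerivAt_pow 3 t).div_const 6)).add
          ((hasDerivAt_pow 5 t).div_const 120)).sub ((hasDerivAt_pow 7 t).div_const 5040)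
        exact this.congr_deriv (by push_cast; ring)
      exact h1.sub h2
    · intro t ht
      have := cos_ge6 t ht.le
      linarith
  linarith

private lemma cos_le8 (x : ℝ) (hx : 0 ≤ x) :
    Real.cos x ≤ 1 - x^2/2 + x^4/24 - x^6/720 + x^8/40320 := by
  have h : 0 ≤ (1 - x^2/2 + x^4/24 - x^6/720 + x^8/40320) - Real.cos x := by
    apply nonneg_aux _ (fun t => Real.sin t - (t - t^3/6 + t^5/120 - t^7/5040)) _ (by norm_num) _ hx
    · intro t
      have h1 := Real.hasDerivAt_cos t
      have h2 : HasDerivAt (fun t : ℝ => 1 - t^2/2 + t^4/24 - t^6/720 + t^8/40320)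
          (-t + t^3/6 - t^5/120 + t^7/5040) t := by
        have := (((((hasDerivAt_pow 2 t).div_const 2).const_sub 1).add
          ((hasDerivAt_pow 4 t).div_const 24)).sub ((hasDerivAt_pow 6 t).div_const 720)).add
          ((hasDerivAt_pow 8 t).div_const 40320)
        exact this.congr_deriv (by push_cast; ring)
      exact (h2.sub h1).congr_deriv (by ring)
    · intro t ht
      have := sin_ge7 t ht.le
      linarith
  linarith

private lemma sin_le9 (x : ℝ) (hx : 0 ≤ x) :
    Real.sin x ≤ x - x^3/6 + x^5/120 - x^7/5040 + x^9/362880 := by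
  have h : 0 ≤ (x - x^3/6 + x^5/120 - x^7/5040 + x^9/362880) - Real.sin x := by
    apply nonneg_aux _
      (fun t => (1 - t^2/2 + t^4/24 - t^6/720 + t^8/40320) - Real.cos t) _ (by norm_num) _ hx
    · intro t
      have h1 := Real.hasDerivAt_sin t
      have h2 : HasDerivAt (fun t : ℝ => t - t^3/6 + t^5/120 - t^7/5040 + t^9/362880)
          (1 - t^2/2 + t^4/24 - t^6/720 + t^8/40320) t := by
        have := ((((hasDerivAt_id t).sub ((hasDerivAt_pow 3 t).div_const 6)).add
          ((hasDerivAt_pow 5 t).div_const 120)).sub ((hasDerivAt_pow 7 t).div_const 5040)).add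
          ((hasDerivAt_pow 9 t).div_const 362880)
        exact this.congr_deriv (by push_cast; ring)
      exact h2.sub h1
    · intro t ht
      have := cos_le8 t ht.le
      linarith
  linarith

theorem pade_lt_cos_sq (x : ℝ) (hx : 0 < x) (hx2 : x < Real.pi / 2) :
    (-59 * x ^ 6 + 962 * x ^ 4 - 3675 * x ^ 2 + 4095) / (17 * x ^ 4 + 420 * x ^ 2 + 4095) <
      Real.cos x ^ 2 := by
  have hD : (0:ℝ) < 17 * x ^ 4 + 420 * x ^ 2 + 4095 := by positivity
  rw [div_lt_iff₀ hD]
  have hpi := Real.pi_pos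
  have hsin0 : 0 ≤ Real.sin x := Real.sin_nonneg_of_nonneg_of_le_pi hx.le (by linarith)
  have hS9 := sin_le9 x hx.le
  have hsq : Real.sin x ^ 2 ≤ (x - x^3/6 + x^5/120 - x^7/5040 + x^9/362880) ^ 2 :=
    pow_le_pow_left₀ hsin0 hS9 2
  have hx25 : x ^ 2 ≤ 2.481 := by
    have h315 := Real.pi_lt_d2
    nlinarith
  have hR : 0 < (1453:ℝ)/120960 - 1009/1036800*x^2 + 1763/43545600*x^4
      - 14951/14631321600*x^6 + 169/10973491200*x^8 - 17/131681894400*x^10 := by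
    have h6 : x^6 ≤ 2.481^2 * x^2 := by nlinarith [sq_nonneg x, sq_nonneg (x^2)]
    have h10 : x^10 ≤ 2.481^4 * x^2 := by nlinarith [sq_nonneg x, sq_nonneg (x^2), sq_nonneg (x^4), pow_nonneg hx.le 6]
    nlinarith [pow_nonneg hx.le 4, pow_nonneg hx.le 8, sq_nonneg x]
  have key : x^2 * (59*x^4 - 945*x^2 + 4095)
      - (x - x^3/6 + x^5/120 - x^7/5040 + x^9/362880)^2 * (17*x^4 + 420*x^2 + 4095)
      = x^12 * ((1453:ℝ)/120960 - 1009/1036800*x^2 + 1763/43545600*x^4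
        - 14951/14631321600*x^6 + 169/10973491200*x^8 - 17/131681894400*x^10) := by
    ring
  have hx12 : (0:ℝ) < x^12 := pow_pos hx 12
  have hQ : (x - x^3/6 + x^5/120 - x^7/5040 + x^9/362880)^2 * (17*x^4 + 420*x^2 + 4095)
      < x^2 * (59*x^4 - 945*x^2 + 4095) := by nlinarith [mul_pos hx12 hR]
  have hmul : Real.sin x ^ 2 * (17*x^4 + 420*x^2 + 4095)
      ≤ (x - x^3/6 + x^5/120 - x^7/5040 + x^9/362880)^2 * (17*x^4 + 420*x^2 + 4095) :=
    mul_le_mul_of_nonneg_right hsq hD.le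
  have hpy := Real.sin_sq_add_cos_sq x
  nlinarith [hmul, hQ, hpy]
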